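/- arXiv:1708.09690 — 2 statements merged into one kernel-verified Lean document; each statement's English description precedes it below -/
import Mathlib

section
/- Let P, b, a, K : ℝ → ℝ be continuous on [t_init, 0], with P Lipschitz along a trajectory with bounded velocity, P(t) > 0 and b(t) < 0 for t ∈ [t_init, 0), P(0) = 0, b(0) < 0, and K(0) < 0. Define ẍ(t) = a(t) - K(t)·b(t)/P(t). If additionally x satisfies ẋ(t_init) > 0, then ẋ cannot remain positive on all of [t_init, 0); i.e., slip motion terminates before reaching the state P = 0 < -b. -/
/-- Theorem 1 of the paper (single point contact): with contact force `λ = -b/P`,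
tangential dynamics `ẍ = a - K·b/P`, `b < 0 < P` during slip, `P` Lipschitz in the
configuration `q` (which moves with bounded velocity), `P(0) = 0`, `b(0) < 0`,
`K(0) < 0`, slip motion (`ẋ > 0`) cannot persist on all of `[t_init, 0)`. -/
theorem stmt_2 {m : ℕ} (tinit : ℝ) (htinit : tinit < 0)
    (q q' : ℝ → EuclideanSpace ℝ (Fin m)) (Pfun : EuclideanSpace ℝ (Fin m) → ℝ)
    (L : NNReal) (hLip : LipschitzWith L Pfun)
    (hq : ∀ t ∈ Set.Icc tinit 0, HasDerivAt q (q' t) t)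
    (M : ℝ) (hbd : ∀ t ∈ Set.Icc tinit 0, ‖q' t‖ ≤ M)
    (a b K : ℝ → ℝ)
    (ha : ContinuousOn a (Set.Icc tinit 0))
    (hbcont : ContinuousOn b (Set.Icc tinit 0))
    (hKcont : ContinuousOn K (Set.Icc tinit 0))
    (hPpos : ∀ t ∈ Set.Ico tinit 0, 0 < Pfun (q t))
    (hbneg : ∀ t ∈ Set.Ico tinit 0, b t < 0)
    (hP0 : Pfun (q 0) = 0) (hb0 : b 0 < 0) (hK0 : K 0 < 0)
    (x x' : ℝ → ℝ)
    (hx1 : ∀ t ∈ Set.Ico tinit 0, HasDerivAt x (x' t) t)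
    (hx2 : ∀ t ∈ Set.Ico tinit 0,
      HasDerivAt x' (a t - K t * b t / Pfun (q t)) t)
    (hslip0 : 0 < x' tinit) :
    ¬ (∀ t ∈ Set.Ico tinit 0, 0 < x' t) := by
  intro hcontra
  have h0mem : (0:ℝ) ∈ Set.Icc tinit 0 := ⟨le_of_lt htinit, le_refl 0⟩
  have htin : tinit ∈ Set.Icc tinit 0 := ⟨le_refl _, le_of_lt htinit⟩
  have htinI : tinit ∈ Set.Ico tinit 0 := ⟨le_refl _, htinit⟩
  have hM0 : (0:ℝ) ≤ M := le_trans (norm_nonneg _) (hbd tinit htin)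
  set C : ℝ := (L : ℝ) * M with hC
  -- bound on P along the trajectory
  have hPle : ∀ t ∈ Set.Icc tinit 0, Pfun (q t) ≤ C * (-t) := by
    intro t ht
    have hq0 : ‖q 0 - q t‖ ≤ M * ‖(0:ℝ) - t‖ :=
      (convex_Icc tinit 0).norm_image_sub_le_of_norm_hasDerivWithin_le
        (fun s hs => (hq s hs).hasDerivWithinAt) hbd ht h0mem
    have hlip := hLip.dist_le_mul (q t) (q 0)
    have h1 : dist (Pfun (q t)) (Pfun (q 0)) = |Pfun (q t)| := by
      rw [hP0, Real.dist_eq, sub_zero]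
    have h2 : dist (q t) (q 0) = ‖q 0 - q t‖ := by
      rw [dist_eq_norm, norm_sub_rev]
    have h3 : ‖(0:ℝ) - t‖ = -t := by
      rw [zero_sub, Real.norm_eq_abs, abs_neg, abs_of_nonpos ht.2]
    calc Pfun (q t) ≤ |Pfun (q t)| := le_abs_self _
      _ = dist (Pfun (q t)) (Pfun (q 0)) := h1.symm
      _ ≤ (L:ℝ) * dist (q t) (q 0) := hlip
      _ ≤ (L:ℝ) * (M * (-t)) := by
          rw [h2]
          have := hq0
          rw [h3] at this
          exact mul_le_mul_of_nonneg_left this (NNReal.coe_nonneg L)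
      _ = C * (-t) := by ring
  have hCpos : 0 < C := by
    have h1 := hPpos tinit htinI
    have h2 := hPle tinit htin
    nlinarith
  -- positive lower bound on K*b near 0
  set c : ℝ := K 0 * b 0 / 2 with hc
  have hcpos : 0 < c := by
    have := mul_pos_of_neg_of_neg hK0 hb0
    positivity
  have hKb : ContinuousWithinAt (fun t => K t * b t) (Set.Icc tinit 0) 0 :=
    (hKcont.mul hbcont) 0 h0mem
  have hcKb : c < K 0 * b 0 := by
    have := mul_pos_of_neg_of_neg hK0 hb0
    linarith
  have hev : ∀ᶠ t in nhdsWithin 0 (Set.Icc tinit 0), c < K t * b t :=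
    hKb.eventually (eventually_gt_nhds hcKb)
  rw [Filter.Eventually, Metric.mem_nhdsWithin_iff] at hev
  obtain ⟨δ, hδpos, hδ'⟩ := hev
  have hδ : ∀ t ∈ Set.Icc tinit 0, dist t 0 < δ → c < K t * b t := by
    intro t ht hd
    exact hδ' ⟨Metric.mem_ball.mpr hd, ht⟩
  set t1 : ℝ := max tinit (-(δ/2)) with ht1
  have ht1neg : t1 < 0 := max_lt htinit (by linarith)
  have ht1ge : tinit ≤ t1 := le_max_left _ _
  have hsub : ∀ s ∈ Set.Ico t1 0, s ∈ Set.Ico tinit 0 := by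
    intro s hs; exact ⟨le_trans ht1ge hs.1, hs.2⟩
  have hsubc : ∀ s ∈ Set.Ico t1 0, s ∈ Set.Icc tinit 0 := by
    intro s hs; exact ⟨le_trans ht1ge hs.1, le_of_lt hs.2⟩
  have hKbge : ∀ s ∈ Set.Ico t1 0, c < K s * b s := by
    intro s hs
    apply hδ s (hsubc s hs)
    rw [Real.dist_eq, sub_zero, abs_of_nonpos (le_of_lt hs.2)]
    have h1 : -(δ/2) ≤ t1 := le_max_right _ _
    have := hs.1
    linarith
  -- bound on a
  obtain ⟨A, hA⟩ := (isCompact_Icc).exists_bound_of_continuousOn ha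
  have hA0 : 0 ≤ A := le_trans (norm_nonneg _) (hA tinit htin)
  set D : ℝ := c / C with hD
  have hDpos : 0 < D := div_pos hcpos hCpos
  set φ : ℝ → ℝ := fun s => x' s - A * s - D * Real.log (-s) with hφ
  -- φ is antitone on [t1, 0)
  have hx'cont : ContinuousOn x' (Set.Ico t1 0) := fun s hs =>
    ((hx2 s (hsub s hs)).continuousAt).continuousWithinAt
  have hφcont : ContinuousOn φ (Set.Ico t1 0) := by
    apply (hx'cont.sub (continuousOn_const.mul continuousOn_id)).sub
    apply continuousOn_const.mul
    intro s hs
    exact ((Real.continuousAt_log (x := -s) (by simp only [neg_ne_zero]; exact ne_of_lt hs.2)).comp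
      (continuousAt_id.neg)).continuousWithinAt
  have hintr : interior (Set.Ico t1 0) = Set.Ioo t1 0 := interior_Ico
  have hφderiv : ∀ s ∈ Set.Ioo t1 0,
      HasDerivAt φ (a s - K s * b s / Pfun (q s) - A - D * s⁻¹) s := by
    intro s hs
    have hs0 : s < 0 := hs.2
    have hsI : s ∈ Set.Ico t1 0 := ⟨le_of_lt hs.1, hs.2⟩
    have hlog : HasDerivAt (fun u : ℝ => Real.log (-u)) s⁻¹ s := by
      have h1 := (Real.hasDerivAt_log (x := -s) (by linarith)).comp s ((hasDerivAt_id s).neg)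
      exact h1.congr_deriv (by simp)
    have h2 : HasDerivAt (fun u : ℝ => A * u) A s := by
      simpa using (hasDerivAt_id s).const_mul A
    have h3 := ((hx2 s (hsub s hsI)).sub h2).sub (hlog.const_mul D)
    exact h3
  have hdiff : DifferentiableOn ℝ φ (interior (Set.Ico t1 0)) := by
    rw [hintr]
    exact fun s hs => ((hφderiv s hs).differentiableAt).differentiableWithinAt
  have hanti : AntitoneOn φ (Set.Ico t1 0) := by
    apply antitoneOn_of_deriv_nonpos (convex_Ico t1 0) hφcont hdiff
    rw [hintr]
    intro s hs
    rw [(hφderiv s hs).deriv]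
    have hs0 : s < 0 := hs.2
    have hsI : s ∈ Set.Ico t1 0 := ⟨le_of_lt hs.1, hs.2⟩
    have hPp := hPpos s (hsub s hsI)
    have hPl := hPle s (hsubc s hsI)
    have hKbs := hKbge s hsI
    have haA : a s ≤ A := le_trans (le_abs_self _) (hA s (hsubc s hsI))
    have hCs : 0 < C * (-s) := mul_pos hCpos (by linarith)
    have key : c / (C * (-s)) ≤ K s * b s / Pfun (q s) :=
      div_le_div₀ (le_of_lt (lt_trans hcpos hKbs)) (le_of_lt hKbs) hPp hPl
    have hDs : D * s⁻¹ = -(c / (C * (-s))) := by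
      rw [hD]
      have hsne : s ≠ 0 := ne_of_lt hs0
      have hCne : C ≠ 0 := ne_of_gt hCpos
      field_simp
    rw [hDs]
    linarith
  -- choose a point s0 close to 0 where the bound forces x' < 0
  set E : ℝ := Real.exp ((-φ t1 - 1) / D) with hE
  have hEpos : 0 < E := Real.exp_pos _
  set ε : ℝ := min ((-t1)/2) E with hε
  have hεpos : 0 < ε := lt_min (by linarith) hEpos
  set s0 : ℝ := -ε with hs0def
  have hs0lt : s0 < 0 := by simp [hs0def]; exact hεpos
  have hs0ge : t1 ≤ s0 := by
    have h1 : ε ≤ (-t1)/2 := min_le_left _ _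
    rw [hs0def]
    linarith
  have hs0mem : s0 ∈ Set.Ico t1 0 := ⟨hs0ge, hs0lt⟩
  have ht1mem : t1 ∈ Set.Ico t1 0 := ⟨le_refl _, ht1neg⟩
  have hφle : φ s0 ≤ φ t1 := hanti ht1mem hs0mem hs0ge
  have hlogε : Real.log ε ≤ (-φ t1 - 1) / D := by
    calc Real.log ε ≤ Real.log E := Real.log_le_log hεpos (min_le_right _ _)
      _ = (-φ t1 - 1) / D := Real.log_exp _
  have hDlog : D * Real.log ε ≤ -φ t1 - 1 := by
    have := mul_le_mul_of_nonneg_left hlogε (le_of_lt hDpos)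
    rwa [mul_div_cancel₀ _ (ne_of_gt hDpos)] at this
  have hAs0 : A * s0 ≤ 0 := mul_nonpos_of_nonneg_of_nonpos hA0 (le_of_lt hs0lt)
  have hx's0 : x' s0 ≤ -1 := by
    have h1 : x' s0 = φ s0 + A * s0 + D * Real.log (-s0) := by
      simp [hφ]; ring
    have h2 : -s0 = ε := by rw [hs0def, neg_neg]
    rw [h1, h2]
    linarith
  have := hcontra s0 (hsub s0 hs0mem)
  linarith
end

section
/- Let u, v : [s₀, ∞) → ℝ satisfy v′ = -v and u′ = -½·u + r(s) with |r(s)| ≤ C·e^{-2s}, and suppose u(s₀) < v(s₀) < 0. Then u(s) < v(s) for all s ≥ s₀ (for s₀ sufficiently large so that the perturbation term is dominated), and both tend to 0 as s → ∞. -/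
open Filter

/-- Abstract formulation of Lemma 2 (dynamic jam): with `v' = -v`,
`u' = -½u + r(s)`, `|r(s)| ≤ C·e^{-2s}`, `u(s₀) < v(s₀) < 0`, and `s₀` large enough
that the perturbation is dominated (`C·e^{-2s₀} < ¼·(-v(s₀))`), the ordering
`u < v` is preserved for all `s ≥ s₀` and both solutions tend to 0. -/
theorem stmt_9 (s₀ C : ℝ) (hC : 0 < C) (u v r : ℝ → ℝ)
    (hv : ∀ s ∈ Set.Ici s₀, HasDerivAt v (-(v s)) s)
    (hu : ∀ s ∈ Set.Ici s₀, HasDerivAt u (-(1 / 2) * u s + r s) s)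
    (hr : ∀ s ∈ Set.Ici s₀, |r s| ≤ C * Real.exp (-2 * s))
    (h1 : u s₀ < v s₀) (h2 : v s₀ < 0)
    (hdom : C * Real.exp (-2 * s₀) < (1 / 4) * (-(v s₀))) :
    (∀ s ≥ s₀, u s < v s) ∧
      Tendsto u atTop (nhds 0) ∧ Tendsto v atTop (nhds 0) := by
  set w : ℝ := v s₀ * Real.exp s₀ with hw
  have hwneg : w < 0 := mul_neg_of_neg_of_pos h2 (Real.exp_pos _)
  -- V = v * exp is constant
  have hVder : ∀ x ∈ Set.Ici s₀, HasDerivWithinAt (fun s => v s * Real.exp s)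
      ((fun _ => (0:ℝ)) x) (Set.Ici s₀) x := by
    intro x hx
    have := ((hv x hx).mul (Real.hasDerivAt_exp x))
    have h0 : -(v x) * Real.exp x + v x * Real.exp x = 0 := by ring
    exact (h0 ▸ this).hasDerivWithinAt
  have hveq : ∀ s ∈ Set.Ici s₀, v s = w * Real.exp (-s) := by
    intro s hs
    have hb := Convex.norm_image_sub_le_of_norm_hasDerivWithin_le (C := 0) hVder
      (fun x _ => by simp) (convex_Ici s₀) (Set.self_mem_Ici) hs
    simp only [zero_mul, norm_le_zero_iff, sub_eq_zero] at hb
    have hVs : v s * Real.exp s = w := hb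
    rw [← hVs, Real.exp_neg, mul_assoc, mul_inv_cancel₀ (Real.exp_pos s).ne', mul_one]
  -- z = u * exp(s/2) has derivative r s * exp(s/2)
  have hzder : ∀ x ∈ Set.Ici s₀, HasDerivAt (fun s => u s * Real.exp (s / 2))
      (r x * Real.exp (x / 2)) x := by
    intro x hx
    have he : HasDerivAt (fun s : ℝ => Real.exp (s / 2)) (Real.exp (x / 2) * (1 / 2)) x := by
      have := (Real.hasDerivAt_exp (x / 2)).comp x ((hasDerivAt_id x).div_const 2)
      simpa [Function.comp_def] using this
    have : HasDerivAt (fun s => u s * Real.exp (s / 2)) _ x := (hu x hx).mul he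
    convert this using 1
    ring
  -- the key comparison: g = u*exp(s/2) - w*exp(-s/2) is strictly decreasing
  set g : ℝ → ℝ := fun s => u s * Real.exp (s / 2) - w * Real.exp (-(s / 2)) with hg
  have hgder : ∀ x ∈ Set.Ici s₀, HasDerivAt g
      (r x * Real.exp (x / 2) + (w / 2) * Real.exp (-(x / 2))) x := by
    intro x hx
    have he : HasDerivAt (fun s : ℝ => w * Real.exp (-(s / 2)))
        (w * (Real.exp (-(x / 2)) * (-(1 / 2)))) x := by
      have h1 : HasDerivAt (fun s : ℝ => -(s / 2)) (-(1/2) : ℝ) x := by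
        simpa [Function.comp_def, Pi.neg_def] using ((hasDerivAt_id x).div_const 2).neg
      exact ((Real.hasDerivAt_exp (-(x / 2))).comp x h1).const_mul w
    have : HasDerivAt (fun s => u s * Real.exp (s / 2) - w * Real.exp (-(s / 2))) _ x :=
      (hzder x hx).sub he
    convert this using 1
    ring
  have hgneg : ∀ x ∈ interior (Set.Ici s₀), deriv g x < 0 := by
    intro x hx
    rw [interior_Ici] at hx
    have hx' : x ∈ Set.Ici s₀ := Set.Ioi_subset_Ici_self hx
    have hxs : s₀ ≤ x := Set.mem_Ici.mp hx'
    rw [(hgder x hx').deriv]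
    have hb : r x * Real.exp (x / 2) ≤ C * Real.exp (-(3/2) * x) := by
      calc r x * Real.exp (x / 2) ≤ |r x| * Real.exp (x / 2) :=
            mul_le_mul_of_nonneg_right (le_abs_self _) (Real.exp_pos _).le
        _ ≤ C * Real.exp (-2 * x) * Real.exp (x / 2) :=
            mul_le_mul_of_nonneg_right (hr x hx') (Real.exp_pos _).le
        _ = C * Real.exp (-(3/2) * x) := by
            rw [mul_assoc, ← Real.exp_add]; ring_nf
    have h4 : C * Real.exp (-x) < -w / 4 := by
      have hvs : v s₀ = w * Real.exp (-s₀) := hveq s₀ Set.self_mem_Ici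
      have hd : C * Real.exp (-2 * s₀) < (1/4) * (-(w * Real.exp (-s₀))) := by
        rw [← hvs]; exact hdom
      have e2 : C * Real.exp (-s₀) < -w / 4 := by
        have hsp := Real.exp_pos (-s₀)
        have hsplit : Real.exp (-2 * s₀) = Real.exp (-s₀) * Real.exp (-s₀) := by
          rw [← Real.exp_add]; ring_nf
        rw [hsplit] at hd
        nlinarith
      have hxe : Real.exp (-x) ≤ Real.exp (-s₀) := Real.exp_le_exp.mpr (by linarith)
      have e1 : C * Real.exp (-x) ≤ C * Real.exp (-s₀) :=
        mul_le_mul_of_nonneg_left hxe hC.le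
      linarith
    have hep := Real.exp_pos (-(x/2))
    have hfact : C * Real.exp (-(3/2) * x) = (C * Real.exp (-x)) * Real.exp (-(x/2)) := by
      rw [mul_assoc, ← Real.exp_add]; ring_nf
    have h6 : (C * Real.exp (-x) + w/2) * Real.exp (-(x/2)) < (w/4) * Real.exp (-(x/2)) :=
      mul_lt_mul_of_pos_right (by linarith) hep
    have h7 : (w/4) * Real.exp (-(x/2)) < 0 := mul_neg_of_neg_of_pos (by linarith) hep
    have h8 : (C * Real.exp (-x) + w/2) * Real.exp (-(x/2)) =
        (C * Real.exp (-x)) * Real.exp (-(x/2)) + w/2 * Real.exp (-(x/2)) := by ring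
    rw [hfact] at hb
    linarith
  have hgcont : ContinuousOn g (Set.Ici s₀) := fun x hx =>
    (hgder x hx).continuousAt.continuousWithinAt
  have hganti : StrictAntiOn g (Set.Ici s₀) :=
    strictAntiOn_of_deriv_neg (convex_Ici s₀) hgcont hgneg
  have hg0 : g s₀ < 0 := by
    have hlt : u s₀ < w * Real.exp (-s₀) := by
      rw [← hveq s₀ Set.self_mem_Ici]; exact h1
    have hp := Real.exp_pos (s₀ / 2)
    have hx2 : Real.exp (-s₀) * Real.exp (s₀/2) = Real.exp (-(s₀/2)) := by
      rw [← Real.exp_add]; ring_nf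
    have h5 := mul_lt_mul_of_pos_right hlt hp
    rw [mul_assoc, hx2] at h5
    simp only [hg]
    linarith
  have hglt : ∀ s ≥ s₀, g s < 0 := by
    intro s hs
    rcases eq_or_lt_of_le hs with h | h
    · rw [← h]; exact hg0
    · exact lt_trans (hganti Set.self_mem_Ici (le_of_lt h) h) hg0
  have hmain : ∀ s ≥ s₀, u s < v s := by
    intro s hs
    have hgs := hglt s hs
    simp only [hg, sub_neg] at hgs
    rw [hveq s hs]
    have hq := Real.exp_pos (-(s / 2))
    have h5 := mul_lt_mul_of_pos_right hgs hq
    have e1 : Real.exp (s/2) * Real.exp (-(s/2)) = 1 := by rw [← Real.exp_add]; simp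
    have e2 : Real.exp (-(s/2)) * Real.exp (-(s/2)) = Real.exp (-s) := by
      rw [← Real.exp_add]; ring_nf
    rw [mul_assoc, mul_assoc, e1, e2, mul_one] at h5
    exact h5
  have hvlim : Tendsto (fun s => w * Real.exp (-s)) atTop (nhds 0) := by
    have h := Real.tendsto_exp_atBot.comp tendsto_neg_atTop_atBot
    have := h.const_mul w
    simpa using this
  have hvtends : Tendsto v atTop (nhds 0) := by
    refine Tendsto.congr' ?_ hvlim
    filter_upwards [eventually_ge_atTop s₀] with s hs
    exact (hveq s hs).symm
  refine ⟨hmain, ?_, hvtends⟩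
  -- u → 0
  set K : ℝ := C * Real.exp (-(3/2) * s₀) with hK
  have hKpos : 0 < K := mul_pos hC (Real.exp_pos _)
  have hzbound : ∀ s ∈ Set.Ici s₀,
      |u s * Real.exp (s / 2) - u s₀ * Real.exp (s₀ / 2)| ≤ K * (s - s₀) := by
    intro s hs
    have hss : s₀ ≤ s := Set.mem_Ici.mp hs
    have hb := Convex.norm_image_sub_le_of_norm_hasDerivWithin_le
      (f' := fun x => r x * Real.exp (x / 2))
      (fun x hx => (hzder x hx).hasDerivWithinAt)
      (fun x hx => by
        have hxs : s₀ ≤ x := Set.mem_Ici.mp hx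
        have h1 : |r x * Real.exp (x / 2)| = |r x| * Real.exp (x / 2) := by
          rw [abs_mul, abs_of_pos (Real.exp_pos _)]
        rw [Real.norm_eq_abs, h1]
        calc |r x| * Real.exp (x / 2) ≤ C * Real.exp (-2 * x) * Real.exp (x / 2) :=
              mul_le_mul_of_nonneg_right (hr x hx) (Real.exp_pos _).le
          _ = C * Real.exp (-(3/2) * x) := by rw [mul_assoc, ← Real.exp_add]; ring_nf
          _ ≤ K := mul_le_mul_of_nonneg_left (Real.exp_le_exp.mpr (by linarith)) hC.le)
      (convex_Ici s₀) Set.self_mem_Ici hs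
    rw [Real.norm_eq_abs, Real.norm_eq_abs, abs_of_nonneg (by linarith : (0:ℝ) ≤ s - s₀)] at hb
    exact hb
  have hlow : ∀ s ≥ s₀,
      (u s₀ * Real.exp (s₀ / 2)) * Real.exp (-(s/2)) - K * ((s - s₀) * Real.exp (-(s/2)))
        ≤ u s := by
    intro s hs
    have h := (abs_le.mp (hzbound s hs)).1
    have hq := Real.exp_pos (-(s / 2))
    have e1 : Real.exp (s/2) * Real.exp (-(s/2)) = 1 := by rw [← Real.exp_add]; simp
    have h5 := mul_le_mul_of_nonneg_right
      (show u s₀ * Real.exp (s₀/2) - K * (s - s₀) ≤ u s * Real.exp (s/2) by linarith) hq.le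
    have h6 : (u s₀ * Real.exp (s₀/2) - K * (s - s₀)) * Real.exp (-(s/2)) =
        u s₀ * Real.exp (s₀/2) * Real.exp (-(s/2)) - K * ((s - s₀) * Real.exp (-(s/2))) := by
      ring
    have h7 : u s * Real.exp (s/2) * Real.exp (-(s/2)) = u s := by
      rw [mul_assoc, e1, mul_one]
    rw [h6, h7] at h5
    exact h5
  have hup : ∀ s ≥ s₀, u s ≤ w * Real.exp (-s) := by
    intro s hs
    rw [← hveq s hs]
    exact (hmain s hs).le
  have thalf : Tendsto (fun s : ℝ => s / 2) atTop atTop :=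
    tendsto_id.atTop_div_const (by norm_num)
  have hlim_exp_half : Tendsto (fun s : ℝ => Real.exp (-(s/2))) atTop (nhds 0) :=
    Real.tendsto_exp_atBot.comp (tendsto_neg_atTop_atBot.comp thalf)
  have t1 : Tendsto (fun s : ℝ => (s - s₀) * Real.exp (-(s/2))) atTop (nhds 0) := by
    have h := (Real.tendsto_pow_mul_exp_neg_atTop_nhds_zero 1).comp thalf
    have h3 : Tendsto (fun s : ℝ =>
        2 * ((s/2) ^ 1 * Real.exp (-(s/2))) - s₀ * Real.exp (-(s/2))) atTop (nhds 0) := by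
      have := (h.const_mul 2).sub (hlim_exp_half.const_mul s₀)
      simpa using this
    exact h3.congr (fun s => by ring)
  have hL : Tendsto (fun s : ℝ =>
      (u s₀ * Real.exp (s₀ / 2)) * Real.exp (-(s/2)) - K * ((s - s₀) * Real.exp (-(s/2))))
      atTop (nhds 0) := by
    have := (hlim_exp_half.const_mul (u s₀ * Real.exp (s₀/2))).sub (t1.const_mul K)
    simpa using this
  exact tendsto_of_tendsto_of_tendsto_of_le_of_le' hL hvlim
    (eventually_atTop.2 ⟨s₀, hlow⟩) (eventually_atTop.2 ⟨s₀, hup⟩)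
end
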